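/- Let C_1,...,C_n be random variables and c > 0 a threshold, with c/n > β_max and s_min ≤ β_max. Then the McDiarmid-type bound ((s_max-β_max)/(s_max-c/n))^{(s_max-c/n)/(s_max-s_min)} · ((β_max-s_min)/(c/n-s_min))^{(c/n-s_min)/(s_max-s_min)} is at most 1, with equality iff c/n = β_max; i.e., for s_min ≤ β_max < c/n < s_max the quantity is strictly less than 1. -/

import Mathlib

/-- The per-trial McDiarmid bound factor is strictly less than `1` whenever
`s_min ≤ β_max < c/n < s_max`. -/
theorem mcdiarmid_factor_lt_one (smin smax βmax r : ℝ)
    (h1 : smin ≤ βmax) (h2 : βmax < r) (h3 : r < smax) :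
    ((smax - βmax) / (smax - r)) ^ ((smax - r) / (smax - smin))
        * ((βmax - smin) / (r - smin)) ^ ((r - smin) / (smax - smin)) < 1 := by
  have hD0 : 0 < smax - smin := by linarith
  have hw0 : 0 < (smax - r) / (smax - smin) := div_pos (by linarith) hD0
  have hu0 : 0 < (r - smin) / (smax - smin) := div_pos (by linarith) hD0
  have hsum : (smax - r) / (smax - smin) + (r - smin) / (smax - smin) = 1 := by
    field_simp
    ring
  have ha1 : 1 < (smax - βmax) / (smax - r) :=
    (one_lt_div (by linarith)).2 (by linarith)
  rcases eq_or_lt_of_le h1 with heq | hlt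
  · have hz : βmax - smin = 0 := by linarith
    rw [hz, zero_div, Real.zero_rpow (ne_of_gt hu0), mul_zero]
    exact zero_lt_one
  · have hb0 : 0 < (βmax - smin) / (r - smin) := div_pos (by linarith) (by linarith)
    have hb1 : (βmax - smin) / (r - smin) < 1 :=
      (div_lt_one (by linarith)).2 (by linarith)
    have hne : (smax - βmax) / (smax - r) ≠ (βmax - smin) / (r - smin) := by
      intro h; rw [h] at ha1; linarith
    have key := strictConcaveOn_log_Ioi.2 (Set.mem_Ioi.2 (lt_trans zero_lt_one ha1))
      (Set.mem_Ioi.2 hb0) hne hw0 hu0 hsum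
    have hcomb : (smax - r) / (smax - smin) * ((smax - βmax) / (smax - r))
        + (r - smin) / (smax - smin) * ((βmax - smin) / (r - smin)) = 1 := by
      rw [div_mul_div_comm, div_mul_div_comm]
      rw [mul_comm (smax - smin) (smax - r), mul_comm (smax - smin) (r - smin)]
      rw [mul_div_mul_left _ _ (by linarith : smax - r ≠ 0),
          mul_div_mul_left _ _ (by linarith : r - smin ≠ 0)]
      field_simp
      ring
    rw [smul_eq_mul, smul_eq_mul, smul_eq_mul, smul_eq_mul, hcomb, Real.log_one] at key
    rw [Real.rpow_def_of_pos (lt_trans zero_lt_one ha1),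
        Real.rpow_def_of_pos hb0, ← Real.exp_add]
    calc Real.exp (Real.log ((smax - βmax) / (smax - r)) * ((smax - r) / (smax - smin))
          + Real.log ((βmax - smin) / (r - smin)) * ((r - smin) / (smax - smin)))
        < Real.exp 0 := Real.exp_lt_exp.2 (by nlinarith [key])
      _ = 1 := Real.exp_zero
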